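/- Let F be a fusion system on a finite p-group S, and let H be a collection of subgroups of S that is closed under F-conjugation and under taking subgroups. Let X₀ be a virtual S-set with rational coefficients such that |X₀^P| = |X₀^{P'}| for all subgroups P, P' of S with P, P' ∉ H that are F-conjugate. Then there exists a virtual S-set X with rational coefficients such that: (a) |X^P| = |X^{P'}| for all subgroups P, P' of S that are F-conjugate; (b) |X^P| = |X₀^P| for all subgroups P of S with P ∉ H; and (c) X − X₀ is a virtual S-set with nonnegative rational coefficients. -/

import Mathlib

/-- The conjugation homomorphism `c_s : P → Q`, `u ↦ s u s⁻¹`,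
for subgroups `P, Q` of `S` with `s P s⁻¹ ≤ Q`. -/
def conjHom {S : Type} [Group S] (P Q : Subgroup S) (s : S)
    (h : ∀ p ∈ P, s * p * s⁻¹ ∈ Q) : ↥P →* ↥Q where
  toFun p := ⟨s * (p : S) * s⁻¹, h p p.2⟩
  map_one' := by ext; simp
  map_mul' a b := by ext; push_cast; group

/-- A fusion system on a group `S`: for each pair of subgroups `P, Q` of `S` a set
of injective group homomorphisms `P → Q`, containing all conjugation maps induced by
elements of `S`, closed under composition, and such that every morphism, corestricted
to an isomorphism onto its image, lies in the system together with its inverse. -/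
structure FusionSystem (S : Type) [Group S] where
  Hom : ∀ P Q : Subgroup S, Set (↥P →* ↥Q)
  inj : ∀ {P Q : Subgroup S} {φ : ↥P →* ↥Q}, φ ∈ Hom P Q → Function.Injective φ
  conj_mem : ∀ (P Q : Subgroup S) (s : S) (h : ∀ p ∈ P, s * p * s⁻¹ ∈ Q),
    conjHom P Q s h ∈ Hom P Q
  comp_mem : ∀ {P Q R : Subgroup S} {φ : ↥P →* ↥Q} {ψ : ↥Q →* ↥R},
    φ ∈ Hom P Q → ψ ∈ Hom Q R → ψ.comp φ ∈ Hom P R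
  restrict_mem : ∀ {P Q : Subgroup S} {φ : ↥P →* ↥Q}, φ ∈ Hom P Q →
    ∃ ψ ∈ Hom P (Subgroup.map Q.subtype φ.range),
      ∃ χ ∈ Hom (Subgroup.map Q.subtype φ.range) P,
        (∀ u : ↥P, ((ψ u : S)) = ((φ u : ↥Q) : S)) ∧
        (∀ u, χ (ψ u) = u) ∧ (∀ v, ψ (χ v) = v)

/-- Two subgroups are `F`-conjugate if there is an isomorphism between them in `F`. -/
def FConj {S : Type} [Group S] (F : FusionSystem S) (P P' : Subgroup S) : Prop :=
  ∃ φ ∈ F.Hom P P', Function.Bijective φ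

/-- An `S`-`S`-biset: a set with commuting left and right `S`-actions. -/
structure Biset (S : Type) [Group S] where
  X : Type
  l : S → X → X
  r : X → S → X
  l_one : ∀ x, l 1 x = x
  l_mul : ∀ s t x, l (s * t) x = l s (l t x)
  r_one : ∀ x, r x 1 = x
  r_mul : ∀ x s t, r x (s * t) = r (r x s) t
  lr_comm : ∀ s x t, l s (r x t) = r (l s x) t

/-- The relation on `S × S` generated by `(xq, y) ∼ (x, φ(q)y)` for `q ∈ Q`. -/
def amalgRel {S : Type} [Group S] (Q : Subgroup S) (φ : ↥Q →* S) :
    S × S → S × S → Prop :=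
  fun a b => ∃ q : Q, a.1 = b.1 * q ∧ b.2 = φ q * a.2

/-- The `S`-`S`-biset `S ×_{(Q,φ)} S`. -/
def amalgBiset {S : Type} [Group S] (Q : Subgroup S) (φ : ↥Q →* S) : Biset S where
  X := Quot (amalgRel Q φ)
  l s := Quot.map (fun a => (s * a.1, a.2))
    (by rintro a b ⟨q, h1, h2⟩; exact ⟨q, by simp only []; rw [h1, mul_assoc], h2⟩)
  r x t := Quot.map (fun a => (a.1, a.2 * t))
    (by rintro a b ⟨q, h1, h2⟩; exact ⟨q, h1, by simp only []; rw [h2, mul_assoc]⟩) x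
  l_one := by rintro ⟨a⟩; simp [Quot.map]
  l_mul := by rintro s t ⟨a⟩; simp [Quot.map, mul_assoc]
  r_one := by rintro ⟨a⟩; simp [Quot.map]
  r_mul := by rintro ⟨a⟩ s t; simp [Quot.map, mul_assoc]
  lr_comm := by rintro s ⟨a⟩ t; simp [Quot.map]

/-- An injective map of `S`-`S`-bisets from `A` into `B` (a copy of `A` as a subbiset of `B`). -/
def ContainsCopy {S : Type} [Group S] (A B : Biset S) : Prop :=
  ∃ e : A.X → B.X, Function.Injective e ∧
    (∀ s z, e (A.l s z) = B.l s (e z)) ∧ (∀ z t, e (A.r z t) = B.r (e z) t)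

/-- An isomorphism of `S`-`S`-bisets from `A` onto the subset `O` of `B`. -/
def CopyOnto {S : Type} [Group S] (A B : Biset S) (O : Set B.X) : Prop :=
  ∃ e : A.X → B.X, Function.Injective e ∧ Set.range e = O ∧
    (∀ s z, e (A.l s z) = B.l s (e z)) ∧ (∀ z t, e (A.r z t) = B.r (e z) t)

/-- `X` is `F`-generated: every transitive subbiset (i.e. every `S`-`S`-orbit) of `X`
is isomorphic to `S ×_{(Q,φ)} S` for some `Q ≤ S` and `φ ∈ Hom_F(Q, S)`. -/
def FGenerated {S : Type} [Group S] (F : FusionSystem S) (B : Biset S) : Prop :=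
  ∀ x : B.X, ∃ (Q : Subgroup S) (φ : ↥Q →* ↥(⊤ : Subgroup S)), φ ∈ F.Hom Q ⊤ ∧
    CopyOnto (amalgBiset Q ((Subgroup.subtype ⊤).comp φ)) B
      {y | ∃ s t : S, y = B.l s (B.r x t)}

/-- `X` is left `F`-stable: for every `Q ≤ S` and `φ ∈ Hom_F(Q, S)`, the `Q`-`S`-bisets
`_Q X` and `_φ X` are isomorphic. -/
def LeftFStable {S : Type} [Group S] (F : FusionSystem S) (B : Biset S) : Prop :=
  ∀ (Q : Subgroup S) (φ : ↥Q →* ↥(⊤ : Subgroup S)), φ ∈ F.Hom Q ⊤ →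
    ∃ e : B.X ≃ B.X,
      (∀ (q : ↥Q) (x : B.X), e (B.l (q : S) x) = B.l ((φ q : ↥(⊤ : Subgroup S)) : S) (e x)) ∧
      (∀ (x : B.X) (s : S), e (B.r x s) = B.r (e x) s)

/-- A left semicharacteristic biset for `F`: a finite `S`-`S`-biset which is
`F`-generated and left `F`-stable. -/
def IsLeftSemicharacteristic {S : Type} [Group S] (F : FusionSystem S) (B : Biset S) : Prop :=
  Finite B.X ∧ FGenerated F B ∧ LeftFStable F B

/-- The group of automorphisms of `X` as a right `S`-set: all bijections `f : X → X`
with `f (x s) = f x · s`. -/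
def rEquivGroup {S : Type} [Group S] (B : Biset S) : Subgroup (Equiv.Perm B.X) where
  carrier := {f | ∀ x s, f (B.r x s) = B.r (f x) s}
  one_mem' := fun _ _ => rfl
  mul_mem' := by
    intro f g hf hg x s
    simp only [Equiv.Perm.mul_apply, hg x s, hf (g x) s]
  inv_mem' := by
    intro f hf x s
    apply f.injective
    rw [hf, Equiv.Perm.coe_inv, Equiv.apply_symm_apply, Equiv.apply_symm_apply]

/-- The virtual fixed-point count `|X^P|` of a virtual `S`-set given by the formal
sum `Σ_H (c H) · S/H`. -/
noncomputable def fixedCount {S : Type} [Group S] (c : Subgroup S → ℚ) (P : Subgroup S) : ℚ :=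
  ∑ᶠ H : Subgroup S, c H * (Nat.card {x : S ⧸ H // ∀ p ∈ P, p • x = x} : ℚ)

/-- Subgroups `P, Q` of `S` are `S`-conjugate. -/
def SConj {S : Type} [Group S] (P Q : Subgroup S) : Prop :=
  ∃ g : S, Q = Subgroup.map (MulAut.conj g).toMonoidHom P

/-- An isomorphism of `S`-`S`-bisets. -/
def BisetIso {S : Type} [Group S] (A B : Biset S) : Prop :=
  ∃ e : A.X ≃ B.X,
    (∀ s z, e (A.l s z) = B.l s (e z)) ∧ (∀ z t, e (A.r z t) = B.r (e z) t)

/-- Disjoint union of a family of `S`-`S`-bisets. -/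
def sigmaBiset {S : Type} [Group S] {ι : Type} (B : ι → Biset S) : Biset S where
  X := Σ i : ι, (B i).X
  l s x := ⟨x.1, (B x.1).l s x.2⟩
  r x t := ⟨x.1, (B x.1).r x.2 t⟩
  l_one := by rintro ⟨i, x⟩; simp [(B i).l_one]
  l_mul := by rintro s t ⟨i, x⟩; simp [(B i).l_mul]
  r_one := by rintro ⟨i, x⟩; simp [(B i).r_one]
  r_mul := by rintro ⟨i, x⟩ s t; simp [(B i).r_mul]
  lr_comm := by rintro s ⟨i, x⟩ t; simp [(B i).lr_comm]

/-- The biset `S ×_{(S,α)} S` for an endomorphism `α` of `S` (with `Q = S`). -/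
def fullAmalg (S : Type) [Group S] (α : S →* S) : Biset S :=
  amalgBiset ⊤ (α.comp (Subgroup.subtype ⊤))

/-- `Y₀ = ∐ᵢ S ×_{(S,αᵢ)} S` for a family of morphisms `αᵢ ∈ Hom_F(S,S)`. -/
def diagUnion (S : Type) [Group S] {n : ℕ}
    (α : Fin n → (↥(⊤ : Subgroup S) →* ↥(⊤ : Subgroup S))) : Biset S :=
  sigmaBiset (fun i => amalgBiset ⊤ ((Subgroup.subtype ⊤).comp (α i)))

set_option linter.unusedSectionVars false

-- ===== auxiliary =====
open scoped Classical

namespace StableAux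

/-- fixed-point count of `P` on `S ⧸ K`, as a rational. -/
noncomputable def marks {S : Type} [Group S] (P K : Subgroup S) : ℚ :=
  (Nat.card {x : S ⧸ K // ∀ p ∈ P, p • x = x} : ℚ)

section Marks
variable {S : Type} [Group S] [Fintype S]

lemma marks_nonneg (P K : Subgroup S) : 0 ≤ marks P K := Nat.cast_nonneg _

lemma fixedCount_eq_sum (c : Subgroup S → ℚ) (P : Subgroup S) :
    fixedCount c P = ∑ K : Subgroup S, c K * marks P K :=
  finsum_eq_sum_of_fintype _

lemma marks_self_pos (P : Subgroup S) : 0 < marks P P := by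
  have h1 : ((1 : S) : S ⧸ P) ∈ {x : S ⧸ P | ∀ p ∈ P, p • x = x} := by
    intro p hp
    show ((p * 1 : S) : S ⧸ P) = ((1 : S) : S ⧸ P)
    rw [QuotientGroup.eq]
    simpa using P.inv_mem hp
  have : Nonempty {x : S ⧸ P // ∀ p ∈ P, p • x = x} := ⟨⟨_, h1⟩⟩
  exact_mod_cast Nat.cast_pos.mpr Nat.card_pos

lemma marks_ne_zero_subconj {P K : Subgroup S} (h : marks P K ≠ 0) :
    ∃ g : S, Subgroup.map (MulAut.conj g).toMonoidHom P ≤ K := by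
  have hne : Nonempty {x : S ⧸ K // ∀ p ∈ P, p • x = x} := by
    have h0 : Nat.card {x : S ⧸ K // ∀ p ∈ P, p • x = x} ≠ 0 := by
      intro h0; exact h (by unfold marks; rw [h0]; norm_num)
    exact (Nat.card_ne_zero.mp h0).1
  obtain ⟨⟨x, hx⟩⟩ := hne
  obtain ⟨g, rfl⟩ := QuotientGroup.mk_surjective x
  refine ⟨g⁻¹, ?_⟩
  rintro y hy
  obtain ⟨p, hp, rfl⟩ := Subgroup.mem_map.mp hy
  have := hx p hp
  have h2 : ((p * g : S) : S ⧸ K) = (g : S ⧸ K) := this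
  rw [QuotientGroup.eq] at h2
  have h3 : g⁻¹ * p⁻¹ * g ∈ K := by simpa [mul_assoc] using h2
  have h4 := K.inv_mem h3
  simpa [MulAut.conj, mul_assoc] using h4

lemma marks_conj (g : S) (P K : Subgroup S) :
    marks (Subgroup.map (MulAut.conj g).toMonoidHom P) K = marks P K := by
  unfold marks
  congr 1
  apply Nat.card_congr
  refine ⟨fun x => ⟨g⁻¹ • x.1, ?_⟩, fun x => ⟨g • x.1, ?_⟩, ?_, ?_⟩
  · intro p hp
    have hmem : g * p * g⁻¹ ∈ Subgroup.map (MulAut.conj g).toMonoidHom P :=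
      Subgroup.mem_map.mpr ⟨p, hp, by simp [MulAut.conj]⟩
    have := x.2 _ hmem
    calc p • g⁻¹ • x.1 = (p * g⁻¹) • x.1 := (smul_smul _ _ _)
      _ = (g⁻¹ * (g * p * g⁻¹)) • x.1 := by group
      _ = g⁻¹ • ((g * p * g⁻¹) • x.1) := (smul_smul _ _ _).symm
      _ = g⁻¹ • x.1 := by rw [this]
  · intro p hp
    obtain ⟨q, hq, rfl⟩ := Subgroup.mem_map.mp hp
    have := x.2 q hq
    show (MulAut.conj g q) • g • x.1 = g • x.1
    calc (MulAut.conj g q) • g • x.1 = ((g * q * g⁻¹) * g) • x.1 := by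
          rw [smul_smul]; rfl
      _ = (g * q) • x.1 := by group
      _ = g • (q • x.1) := (smul_smul _ _ _).symm
      _ = g • x.1 := by rw [this]
  · intro x; ext; simp
  · intro x; ext; simp

end Marks


variable {S : Type} [Group S]

lemma conj_comp (a b : S) :
    (MulAut.conj a).toMonoidHom.comp (MulAut.conj b).toMonoidHom
      = (MulAut.conj (a * b)).toMonoidHom := by
  ext x; simp [MulAut.conj, mul_assoc]

lemma map_conj_one (P : Subgroup S) :
    Subgroup.map (MulAut.conj (1 : S)).toMonoidHom P = P := by
  ext x; simp [MulAut.conj]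

lemma sconj_refl (P : Subgroup S) : SConj P P := ⟨1, (map_conj_one P).symm⟩

lemma sconj_symm {P Q : Subgroup S} (h : SConj P Q) : SConj Q P := by
  obtain ⟨g, rfl⟩ := h
  refine ⟨g⁻¹, ?_⟩
  rw [Subgroup.map_map, conj_comp, inv_mul_cancel, map_conj_one]

lemma sconj_trans {P Q R : Subgroup S} (h1 : SConj P Q) (h2 : SConj Q R) : SConj P R := by
  obtain ⟨g, rfl⟩ := h1
  obtain ⟨k, rfl⟩ := h2
  exact ⟨k * g, by rw [Subgroup.map_map, conj_comp]⟩

lemma sconj_card {P K : Subgroup S} (h : SConj P K) : Nat.card K = Nat.card P := by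
  obtain ⟨g, rfl⟩ := h
  exact Nat.card_congr (Subgroup.equivMapOfInjective P _ (MulAut.conj g).injective).toEquiv.symm

variable (F : FusionSystem S)

lemma fconj_of_sconj {P Q : Subgroup S} (h : SConj P Q) : FConj F P Q := by
  obtain ⟨g, rfl⟩ := h
  have hmem : ∀ p ∈ P, g * p * g⁻¹ ∈ Subgroup.map (MulAut.conj g).toMonoidHom P :=
    fun p hp => Subgroup.mem_map.mpr ⟨p, hp, by simp [MulAut.conj]⟩
  refine ⟨conjHom P _ g hmem, F.conj_mem _ _ g hmem, ?_, ?_⟩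
  · intro a b hab
    have : g * (a : S) * g⁻¹ = g * (b : S) * g⁻¹ := congrArg Subtype.val hab
    have : (a : S) = (b : S) := by
      have := mul_right_cancel this
      exact mul_left_cancel this
    exact Subtype.ext this
  · rintro ⟨y, hy⟩
    obtain ⟨x, hx, rfl⟩ := Subgroup.mem_map.mp hy
    exact ⟨⟨x, hx⟩, Subtype.ext (by simp [conjHom, MulAut.conj]; rfl)⟩

lemma fconj_refl (P : Subgroup S) : FConj F P P := fconj_of_sconj F (sconj_refl P)

lemma fconj_trans {P Q R : Subgroup S} (h1 : FConj F P Q) (h2 : FConj F Q R) : FConj F P R := by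
  obtain ⟨φ, hφ, bφ⟩ := h1
  obtain ⟨ψ, hψ, bψ⟩ := h2
  exact ⟨ψ.comp φ, F.comp_mem hφ hψ, bψ.comp bφ⟩

lemma fconj_symm {P P' : Subgroup S} (h : FConj F P P') : FConj F P' P := by
  obtain ⟨φ, hφ, bφ⟩ := h
  obtain ⟨ψ, hψ, χ, hχ, hcoe, hl, hr⟩ := F.restrict_mem hφ
  have hA : Subgroup.map P'.subtype φ.range = P' := by
    rw [MonoidHom.range_eq_top.mpr bφ.surjective, ← MonoidHom.range_eq_map,
      Subgroup.range_subtype]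
  have hmem1 : ∀ p ∈ P', (1 : S) * p * 1⁻¹ ∈ Subgroup.map P'.subtype φ.range := by
    intro p hp; rw [hA]; simpa using hp
  refine ⟨χ.comp (conjHom P' _ 1 hmem1), F.comp_mem (F.conj_mem _ _ 1 hmem1) hχ, ?_⟩
  have bχ : Function.Bijective χ :=
    ⟨fun a b hab => by rw [← hr a, hab, hr b], fun u => ⟨ψ u, hl u⟩⟩
  have bι : Function.Bijective (conjHom P' _ 1 hmem1) := by
    constructor
    · intro a b hab
      have : (1 : S) * (a : S) * 1⁻¹ = 1 * (b : S) * 1⁻¹ := congrArg Subtype.val hab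
      exact Subtype.ext (by simpa using this)
    · rintro ⟨y, hy⟩
      refine ⟨⟨y, hA ▸ hy⟩, Subtype.ext ?_⟩
      simp [conjHom]
  exact (bχ.comp bι : _)

lemma fconj_card {P P' : Subgroup S} (h : FConj F P P') : Nat.card P' = Nat.card P := by
  obtain ⟨φ, hφ, bφ⟩ := h
  exact (Nat.card_eq_of_bijective φ bφ).symm

end StableAux

namespace StableAux

section Main

variable {S : Type} [Group S] [Fintype S] (F : FusionSystem S) (H : Set (Subgroup S))
  (X₀ : Subgroup S → ℚ)

/-- partial fixed count: `X₀` plus contributions of coefficients at subgroups of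
cardinality `> n`. -/
noncomputable def ptc (c : Subgroup S → ℚ) (n : ℕ) (Q : Subgroup S) : ℚ :=
  fixedCount X₀ Q +
    ∑ R ∈ Finset.univ.filter (fun R : Subgroup S => n < Nat.card R), c R * marks Q R

/-- the `F`-conjugacy class of `P` as a finset. -/
noncomputable def fcl (P : Subgroup S) : Finset (Subgroup S) :=
  Finset.univ.filter (fun Q => FConj F P Q)

lemma fcl_nonempty (P : Subgroup S) : (fcl F P).Nonempty :=
  ⟨P, Finset.mem_filter.mpr ⟨Finset.mem_univ P, fconj_refl F P⟩⟩

/-- target value: max of partial counts over the `F`-class. -/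
noncomputable def Mfun (c : Subgroup S → ℚ) (n : ℕ) (P : Subgroup S) : ℚ :=
  (fcl F P).sup' (fcl_nonempty F P) (ptc X₀ c n)

/-- the `S`-conjugacy class of `P` as a finset. -/
noncomputable def scl (P : Subgroup S) : Finset (Subgroup S) :=
  Finset.univ.filter (fun Q => SConj P Q)

noncomputable def nS (P : Subgroup S) : ℕ := (scl (S := S) P).card

lemma nS_pos (P : Subgroup S) : 0 < nS P :=
  Finset.card_pos.mpr ⟨P, Finset.mem_filter.mpr ⟨Finset.mem_univ P, sconj_refl P⟩⟩

end Main

noncomputable def coeff {S : Type} [Group S] [Fintype S] (F : FusionSystem S)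
    (H : Set (Subgroup S)) (X₀ : Subgroup S → ℚ) : Subgroup S → ℚ
  | P =>
    if P ∈ H then
      (Mfun F X₀
          (fun R : Subgroup S =>
            if _h : Nat.card P < Nat.card R then coeff F H X₀ R else 0) (Nat.card P) P -
        ptc X₀
          (fun R : Subgroup S =>
            if _h : Nat.card P < Nat.card R then coeff F H X₀ R else 0) (Nat.card P) P) /
        ((nS P : ℚ) * marks P P)
    else 0
  termination_by P => Fintype.card S - Nat.card P
  decreasing_by
   all_goals
    have hR : Nat.card R ≤ Fintype.card S := by
      rw [← Nat.card_eq_fintype_card]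
      exact Subgroup.card_le_card_group R
    exact Nat.sub_lt_sub_left (lt_of_lt_of_le _h hR) _h

section Main2

variable {S : Type} [Group S] [Fintype S] (F : FusionSystem S) (H : Set (Subgroup S))
  (X₀ : Subgroup S → ℚ)

lemma ptc_congr {c c' : Subgroup S → ℚ} {n : ℕ} (h : ∀ R : Subgroup S, n < Nat.card R → c R = c' R)
    (Q : Subgroup S) : ptc X₀ c n Q = ptc X₀ c' n Q := by
  unfold ptc
  congr 1
  refine Finset.sum_congr rfl fun R hR => ?_
  rw [h R (Finset.mem_filter.mp hR).2]

lemma Mfun_congr {c c' : Subgroup S → ℚ} {n : ℕ} (h : ∀ R : Subgroup S, n < Nat.card R → c R = c' R)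
    (P : Subgroup S) : Mfun F X₀ c n P = Mfun F X₀ c' n P :=
  Finset.sup'_congr _ rfl fun Q _ => ptc_congr X₀ h Q

lemma coeff_spec {P : Subgroup S} (hP : P ∈ H) :
    coeff F H X₀ P =
      (Mfun F X₀ (coeff F H X₀) (Nat.card P) P - ptc X₀ (coeff F H X₀) (Nat.card P) P) /
        ((nS P : ℚ) * marks P P) := by
  rw [coeff, if_pos hP]
  have hagree : ∀ R : Subgroup S, Nat.card P < Nat.card R →
      (if _h : Nat.card P < Nat.card R then coeff F H X₀ R else 0) = coeff F H X₀ R :=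
    fun R hR => dif_pos hR
  rw [Mfun_congr F X₀ hagree, ptc_congr X₀ hagree]

lemma coeff_of_not_mem {P : Subgroup S} (hP : P ∉ H) : coeff F H X₀ P = 0 := by
  rw [coeff, if_neg hP]

end Main2

end StableAux

namespace StableAux

section Main3

variable {S : Type} [Group S] [Fintype S] (F : FusionSystem S) (H : Set (Subgroup S))
  (X₀ : Subgroup S → ℚ)

lemma fixedCount_total (P : Subgroup S) :
    fixedCount (fun K => X₀ K + coeff F H X₀ K) P =
      fixedCount X₀ P + ∑ K : Subgroup S, coeff F H X₀ K * marks P K := by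
  rw [fixedCount_eq_sum, fixedCount_eq_sum, ← Finset.sum_add_distrib]
  exact Finset.sum_congr rfl fun K _ => by ring

lemma mem_of_term_ne_zero
    (hHconj : ∀ P ∈ H, ∀ P' : Subgroup S, FConj F P P' → P' ∈ H)
    (hHsub : ∀ P ∈ H, ∀ P' : Subgroup S, P' ≤ P → P' ∈ H)
    {P K : Subgroup S} (h : coeff F H X₀ K * marks P K ≠ 0) :
    P ∈ H ∧ K ∈ H ∧ ∃ g : S, Subgroup.map (MulAut.conj g).toMonoidHom P ≤ K := by
  obtain ⟨hc, hm⟩ := mul_ne_zero_iff.mp h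
  have hKH : K ∈ H := by
    by_contra hKH
    exact hc (coeff_of_not_mem F H X₀ hKH)
  obtain ⟨g, hle⟩ := marks_ne_zero_subconj hm
  have hmap : Subgroup.map (MulAut.conj g).toMonoidHom P ∈ H := hHsub K hKH _ hle
  exact ⟨hHconj _ hmap P (fconj_of_sconj F (sconj_symm ⟨g, rfl⟩)), hKH, g, hle⟩

lemma fc_outside
    (hHconj : ∀ P ∈ H, ∀ P' : Subgroup S, FConj F P P' → P' ∈ H)
    (hHsub : ∀ P ∈ H, ∀ P' : Subgroup S, P' ≤ P → P' ∈ H)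
    {P : Subgroup S} (hP : P ∉ H) :
    fixedCount (fun K => X₀ K + coeff F H X₀ K) P = fixedCount X₀ P := by
  rw [fixedCount_total]
  have : ∑ K : Subgroup S, coeff F H X₀ K * marks P K = 0 := by
    refine Finset.sum_eq_zero fun K _ => ?_
    by_contra hne
    exact hP (mem_of_term_ne_zero F H X₀ hHconj hHsub hne).1
  rw [this, add_zero]

lemma fixedCount_conj (c : Subgroup S → ℚ) (g : S) (P : Subgroup S) :
    fixedCount c (Subgroup.map (MulAut.conj g).toMonoidHom P) = fixedCount c P := by
  rw [fixedCount_eq_sum, fixedCount_eq_sum]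
  exact Finset.sum_congr rfl fun K _ => by rw [marks_conj]

lemma ptc_conj (c : Subgroup S → ℚ) (n : ℕ) (g : S) (P : Subgroup S) :
    ptc X₀ c n (Subgroup.map (MulAut.conj g).toMonoidHom P) = ptc X₀ c n P := by
  unfold ptc
  rw [fixedCount_conj]
  congr 1
  exact Finset.sum_congr rfl fun K _ => by rw [marks_conj]

lemma fcl_eq_of_fconj {P K : Subgroup S} (h : FConj F P K) : fcl F K = fcl F P := by
  ext Q
  simp only [fcl, Finset.mem_filter, Finset.mem_univ, true_and]
  exact ⟨fun hq => fconj_trans F h hq, fun hq => fconj_trans F (fconj_symm F h) hq⟩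

lemma scl_eq_of_sconj {P K : Subgroup S} (h : SConj P K) : scl K = scl P := by
  ext Q
  simp only [scl, Finset.mem_filter, Finset.mem_univ, true_and]
  exact ⟨fun hq => sconj_trans h hq, fun hq => sconj_trans (sconj_symm h) hq⟩

lemma fc_inside
    (hHconj : ∀ P ∈ H, ∀ P' : Subgroup S, FConj F P P' → P' ∈ H)
    (hHsub : ∀ P ∈ H, ∀ P' : Subgroup S, P' ≤ P → P' ∈ H)
    {P : Subgroup S} (hP : P ∈ H) :
    fixedCount (fun K => X₀ K + coeff F H X₀ K) P =
      Mfun F X₀ (coeff F H X₀) (Nat.card P) P := by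
  set c := coeff F H X₀ with hcdef
  rw [fixedCount_total,
    ← Finset.sum_filter_add_sum_filter_not Finset.univ
      (fun K : Subgroup S => Nat.card P < Nat.card K) (fun K => c K * marks P K),
    ← add_assoc]
  have h1 : fixedCount X₀ P +
      ∑ K ∈ Finset.univ.filter (fun K : Subgroup S => Nat.card P < Nat.card K),
        c K * marks P K = ptc X₀ c (Nat.card P) P := rfl
  rw [h1]
  have h2 : ∑ K ∈ Finset.univ.filter (fun K : Subgroup S => ¬ Nat.card P < Nat.card K),
      c K * marks P K = ∑ K ∈ scl P, c K * marks P K := by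
    refine (Finset.sum_subset ?_ ?_).symm
    · intro K hK
      simp only [scl, Finset.mem_filter, Finset.mem_univ, true_and] at hK ⊢
      exact not_lt.mpr (le_of_eq (sconj_card hK))
    · intro K hK hKn
      by_contra hne
      obtain ⟨-, hKH, g, hle⟩ := mem_of_term_ne_zero F H X₀ hHconj hHsub hne
      have hcard : Nat.card K ≤
          Nat.card (Subgroup.map (MulAut.conj g).toMonoidHom P) := by
        rw [sconj_card ⟨g, rfl⟩]
        exact not_lt.mp (Finset.mem_filter.mp hK).2
      have heq : Subgroup.map (MulAut.conj g).toMonoidHom P = K :=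
        Subgroup.eq_of_le_of_card_ge hle hcard
      exact hKn (Finset.mem_filter.mpr ⟨Finset.mem_univ K, ⟨g, heq.symm⟩⟩)
  rw [h2]
  have h3 : ∀ K ∈ scl P, c K * marks P K =
      (Mfun F X₀ c (Nat.card P) P - ptc X₀ c (Nat.card P) P) / (nS (S := S) P : ℚ) := by
    intro K hK
    have hsc : SConj P K := (Finset.mem_filter.mp hK).2
    obtain ⟨g, hKg⟩ := hsc
    have hFK : FConj F P K := fconj_of_sconj F ⟨g, hKg⟩
    have hKH : K ∈ H := hHconj P hP K hFK
    have hcard : Nat.card K = Nat.card P := sconj_card ⟨g, hKg⟩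
    rw [hcdef, coeff_spec F H X₀ hKH, ← hcdef, hcard]
    have hMP : Mfun F X₀ c (Nat.card P) K = Mfun F X₀ c (Nat.card P) P :=
      Finset.sup'_congr _ (fcl_eq_of_fconj F hFK) fun _ _ => rfl
    have hptP : ptc X₀ c (Nat.card P) K = ptc X₀ c (Nat.card P) P := by
      rw [hKg]; exact ptc_conj X₀ c _ g P
    have hnS : nS K = nS (S := S) P := congrArg Finset.card (scl_eq_of_sconj ⟨g, hKg⟩)
    have hmk : marks P K = marks K K := by rw [hKg, marks_conj]
    rw [hMP, hptP, hnS, hmk]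
    have hmkne : marks K K ≠ 0 := ne_of_gt (marks_self_pos K)
    have hnsne : (nS (S := S) P : ℚ) ≠ 0 := Nat.cast_ne_zero.mpr (nS_pos P).ne'
    field_simp
  rw [Finset.sum_congr rfl h3, Finset.sum_const, nsmul_eq_mul]
  have hnsne : (nS (S := S) P : ℚ) ≠ 0 := Nat.cast_ne_zero.mpr (nS_pos P).ne'
  have : (↑(scl (S := S) P).card : ℚ) = (nS (S := S) P : ℚ) := rfl
  rw [this, mul_div_cancel₀ _ hnsne]
  ring

end Main3

end StableAux


namespace StableAux

lemma ptc_le_Mfun {S : Type} [Group S] [Fintype S] (F : FusionSystem S)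
    (X₀ c : Subgroup S → ℚ) (n : ℕ) (P : Subgroup S) :
    ptc X₀ c n P ≤ Mfun F X₀ c n P :=
  Finset.le_sup' _ (Finset.mem_filter.mpr ⟨Finset.mem_univ P, fconj_refl F P⟩)

lemma coeff_nonneg {S : Type} [Group S] [Fintype S] (F : FusionSystem S)
    (H : Set (Subgroup S)) (X₀ : Subgroup S → ℚ) (K : Subgroup S) :
    0 ≤ coeff F H X₀ K := by
  by_cases hK : K ∈ H
  · rw [coeff_spec F H X₀ hK]
    apply div_nonneg
    · rw [sub_nonneg]
      exact ptc_le_Mfun F X₀ _ _ K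
    · exact mul_nonneg (Nat.cast_nonneg _) (marks_nonneg K K)
  · rw [coeff_of_not_mem F H X₀ hK]

end StableAux

/-- **Lemma (stabilizing an `S`-set).** If `H` is closed under `F`-conjugation and
subgroups and the virtual `S`-set `X₀` has `F`-stable fixed point counts outside `H`,
then `X₀` can be enlarged by a nonnegative virtual `S`-set to a fully `F`-stable
virtual `S`-set without changing fixed point counts outside `H`. -/
theorem exists_stable_virtual_S_set
    (p : ℕ) [Fact p.Prime] (S : Type) [Group S] [Fintype S] (hS : IsPGroup p S)
    (F : FusionSystem S) (H : Set (Subgroup S))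
    (hHconj : ∀ P ∈ H, ∀ P' : Subgroup S, FConj F P P' → P' ∈ H)
    (hHsub : ∀ P ∈ H, ∀ P' : Subgroup S, P' ≤ P → P' ∈ H)
    (X₀ : Subgroup S → ℚ)
    (hX₀ : ∀ P P' : Subgroup S, P ∉ H → P' ∉ H → FConj F P P' →
      fixedCount X₀ P = fixedCount X₀ P') :
    ∃ X : Subgroup S → ℚ,
      (∀ P P' : Subgroup S, FConj F P P' → fixedCount X P = fixedCount X P') ∧
      (∀ P : Subgroup S, P ∉ H → fixedCount X P = fixedCount X₀ P) ∧
      (∀ K : Subgroup S, X₀ K ≤ X K) := by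
  classical
  refine ⟨fun K => X₀ K + StableAux.coeff F H X₀ K, ?_, ?_, ?_⟩
  · intro P P' h
    by_cases hP : P ∈ H
    · have hP' : P' ∈ H := hHconj P hP P' h
      rw [StableAux.fc_inside F H X₀ hHconj hHsub hP,
        StableAux.fc_inside F H X₀ hHconj hHsub hP', StableAux.fconj_card F h]
      unfold StableAux.Mfun
      exact Finset.sup'_congr _ (StableAux.fcl_eq_of_fconj F h).symm fun _ _ => rfl
    · have hP' : P' ∉ H := fun hP' => hP (hHconj P' hP' P (StableAux.fconj_symm F h))
      rw [StableAux.fc_outside F H X₀ hHconj hHsub hP,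
        StableAux.fc_outside F H X₀ hHconj hHsub hP']
      exact hX₀ P P' hP hP' h
  · intro P hP
    exact StableAux.fc_outside F H X₀ hHconj hHsub hP
  · intro K
    exact le_add_of_nonneg_right (StableAux.coeff_nonneg F H X₀ K)
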